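/- Let Γ be a group generated by a finite symmetric set S, and suppose that the second group homology H₂(Γ, ℂ) with trivial complex coefficients vanishes. If there exists a real number ε > 0 such that Δ(S) + ε·b ∈ Σ²ω(Γ) for every b ∈ ω(Γ)^h with ‖b‖₁ = 1, then Γ has Kazhdan's property (T). -/

import Mathlib

noncomputable section

universe u

variable (Γ : Type u) [Group Γ]

/-- The involution of the complex group algebra `ℂ[Γ]`:
`(∑ a_g·g)* = ∑ conj(a_g)·g⁻¹`. -/
def gstar (a : MonoidAlgebra ℂ Γ) : MonoidAlgebra ℂ Γ :=
  a.coeff.sum fun g c => MonoidAlgebra.single g⁻¹ (starRingEnd ℂ c)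

/-- The `ℓ¹`-norm of an element of `ℂ[Γ]`: `‖∑ a_g·g‖₁ = ∑ |a_g|`. -/
def l1norm (a : MonoidAlgebra ℂ Γ) : ℝ :=
  a.coeff.sum fun _ c => ‖c‖

/-- The set `Σ²ℂ[Γ]` of sums of hermitian squares in the group algebra. -/
def SOS : Set (MonoidAlgebra ℂ Γ) :=
  {x | ∃ (n : ℕ) (a : Fin n → MonoidAlgebra ℂ Γ), x = ∑ i, gstar Γ (a i) * a i}

/-- The hermitian elements `ℂ[Γ]^h = {a : a* = a}`. -/
def herm : Set (MonoidAlgebra ℂ Γ) := {a | gstar Γ a = a}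

/-- The augmentation homomorphism `ε : ℂ[Γ] → ℂ`, `∑ a_g·g ↦ ∑ a_g`. -/
def aug : MonoidAlgebra ℂ Γ →ₐ[ℂ] ℂ := MonoidAlgebra.lift ℂ ℂ Γ 1

/-- The augmentation ideal `ω(Γ) = ker ε`. -/
def omega : Set (MonoidAlgebra ℂ Γ) := {a | aug Γ a = 0}

/-- The hermitian part `ω(Γ)^h` of the augmentation ideal. -/
def omegaH : Set (MonoidAlgebra ℂ Γ) := {a | a ∈ omega Γ ∧ gstar Γ a = a}

/-- `Σ²ω(Γ)`: sums of hermitian squares of elements of the augmentation ideal. -/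
def SOSomega : Set (MonoidAlgebra ℂ Γ) :=
  {x | ∃ (n : ℕ) (a : Fin n → MonoidAlgebra ℂ Γ),
    (∀ i, a i ∈ omega Γ) ∧ x = ∑ i, gstar Γ (a i) * a i}

/-- `ω²(Γ)`, the `ℂ`-span of products of two elements of the augmentation ideal. -/
def omegaSq : Set (MonoidAlgebra ℂ Γ) :=
  (Submodule.span ℂ {x : MonoidAlgebra ℂ Γ |
    ∃ a ∈ omega Γ, ∃ b ∈ omega Γ, x = a * b} : Submodule ℂ (MonoidAlgebra ℂ Γ))

/-- `c(g) = g - 1 ∈ ω(Γ)`. -/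
def cE (g : Γ) : MonoidAlgebra ℂ Γ := MonoidAlgebra.of ℂ Γ g - 1

/-- The Laplace operator `Δ(S) = |S| - ∑_{s ∈ S} s` of a finite subset `S ⊆ Γ`. -/
def Delta (S : Finset Γ) : MonoidAlgebra ℂ Γ :=
  (S.card : MonoidAlgebra ℂ Γ) - ∑ s ∈ S, MonoidAlgebra.of ℂ Γ s

section PropertyT



variable (G : Type u) [Group G]

/-- A group `Γ` has **Kazhdan's property (T)** if every 1-cocycle with respect to every
unitary representation of `Γ` on a complex Hilbert space is inner. -/
def PropertyT : Prop :=
  ∀ (H : Type u) (_ : NormedAddCommGroup H) (_ : InnerProductSpace ℂ H)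
    (_ : CompleteSpace H) (π : G →* (H ≃ₗᵢ[ℂ] H)) (δ : G → H),
    (∀ g h : G, δ (g * h) = π g (δ h) + δ g) →
    ∃ ξ : H, ∀ g : G, δ g = π g ξ - ξ

/-- `ε > 0` is a **Kazhdan constant** for `(Γ, S)`: for every unitary representation `π`
of `Γ` on a complex Hilbert space without nonzero fixed vectors one has
`⟨π(Δ(S))ξ, ξ⟩ ≥ ε·‖ξ‖²` for all `ξ`. -/
def IsKazhdanConstant (S : Finset G) (ε : ℝ) : Prop :=
  ∀ (H : Type u) (_ : NormedAddCommGroup H) (_ : InnerProductSpace ℂ H)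
    (_ : CompleteSpace H) (π : G →* (H ≃ₗᵢ[ℂ] H)),
    (∀ ξ : H, (∀ g : G, π g ξ = ξ) → ξ = 0) →
    ∀ ξ : H, ε * ‖ξ‖ ^ 2 ≤ (@inner ℂ H _ ((S.card : ℂ) • ξ - ∑ s ∈ S, π s ξ) ξ).re

end PropertyT

/-- The boundary map `∂₂ : ℂ[Γ²] → ℂ[Γ]` of the (unnormalized, inhomogeneous) bar complex
computing group homology with trivial coefficients `ℂ`: `(g,h) ↦ h - gh + g`. -/
def barD2 (x : (Γ × Γ) →₀ ℂ) : Γ →₀ ℂ :=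
  x.sum fun p c => c •
    (Finsupp.single p.2 (1 : ℂ) - Finsupp.single (p.1 * p.2) 1 + Finsupp.single p.1 1)

/-- The boundary map `∂₃ : ℂ[Γ³] → ℂ[Γ²]` of the bar complex:
`(g,h,k) ↦ (h,k) - (gh,k) + (g,hk) - (g,h)`. -/
def barD3 (x : (Γ × Γ × Γ) →₀ ℂ) : (Γ × Γ) →₀ ℂ :=
  x.sum fun t c => c •
    (Finsupp.single (t.2.1, t.2.2) (1 : ℂ) - Finsupp.single (t.1 * t.2.1, t.2.2) 1 +
      Finsupp.single (t.1, t.2.1 * t.2.2) 1 - Finsupp.single (t.1, t.2.1) 1)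


set_option maxHeartbeats 1000000 in
open Filter Topology in
theorem exists_chebyshev_center {H : Type*} [NormedAddCommGroup H] [InnerProductSpace ℂ H]
    [CompleteSpace H] {ι : Type*} [Nonempty ι] (f : ι → H) (M : ℝ) (hb : ∀ i, ‖f i‖ ≤ M) :
    ∃ v : H, ∀ w : H, (⨆ i, ‖w - f i‖) ≤ (⨆ i, ‖v - f i‖) → w = v := by
  set r : H → ℝ := fun v => ⨆ i, ‖v - f i‖ with hr
  have hbdd : ∀ v : H, BddAbove (Set.range fun i => ‖v - f i‖) := by
    intro v
    refine ⟨‖v‖ + M, ?_⟩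
    rintro x ⟨i, rfl⟩
    calc ‖v - f i‖ ≤ ‖v‖ + ‖f i‖ := norm_sub_le _ _
      _ ≤ ‖v‖ + M := by linarith [hb i]
  have hle : ∀ v i, ‖v - f i‖ ≤ r v := fun v i => le_ciSup (hbdd v) i
  have hrnn : ∀ v, 0 ≤ r v := fun v =>
    le_trans (norm_nonneg _) (hle v (Classical.arbitrary ι))
  have hbddb : BddBelow (Set.range r) := ⟨0, by rintro x ⟨v, rfl⟩; exact hrnn v⟩
  set r0 : ℝ := ⨅ v : H, r v with hr0
  have hr0le : ∀ v, r0 ≤ r v := fun v => ciInf_le hbddb v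
  have hr0nn : 0 ≤ r0 := le_ciInf fun v => hrnn v
  -- key parallelogram estimate
  have key : ∀ v w : H, ‖v - w‖ ^ 2 ≤ 2 * r v ^ 2 + 2 * r w ^ 2 - 4 * r0 ^ 2 := by
    intro v w
    have hm : ∀ θ : ℝ, 0 < θ → ‖v - w‖ ^ 2 ≤ 2 * r v ^ 2 + 2 * r w ^ 2 - 4 * r0 ^ 2 + θ := by
      intro θ hθ
      set m : H := (2:ℝ)⁻¹ • (v + w) with hmdef
      -- there is i with r0^2 - θ/4 < ‖m - f i‖^2
      have hex : ∃ i, r0 ^ 2 - θ / 4 < ‖m - f i‖ ^ 2 := by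
        by_contra hcon
        push_neg at hcon
        have h0 : (0:ℝ) ≤ r0 ^ 2 - θ / 4 :=
          le_trans (sq_nonneg _) (hcon (Classical.arbitrary ι))
        have hsq : ∀ i, ‖m - f i‖ ≤ Real.sqrt (r0 ^ 2 - θ / 4) := by
          intro i
          rw [show ‖m - f i‖ = √(‖m - f i‖^2) by rw [Real.sqrt_sq (norm_nonneg _)]]
          exact Real.sqrt_le_sqrt (hcon i)
        have hrm : r m ≤ Real.sqrt (r0 ^ 2 - θ / 4) := ciSup_le hsq
        have : r0 ≤ Real.sqrt (r0 ^ 2 - θ / 4) := le_trans (hr0le m) hrm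
        have h2 : r0 ^ 2 ≤ r0 ^ 2 - θ / 4 := by
          have := Real.sq_sqrt h0
          nlinarith [this, hr0nn]
        linarith
      obtain ⟨i, hi⟩ := hex
      have hpar := parallelogram_law_with_norm ℂ (v - f i) (w - f i)
      have h1 : v - f i + (w - f i) = (2:ℝ) • (m - f i) := by
        rw [hmdef]; module
      have h2 : v - f i - (w - f i) = v - w := by abel
      rw [h1, h2, norm_smul] at hpar
      have hv := hle v i
      have hw := hle w i
      have hvn : (0:ℝ) ≤ ‖v - f i‖ := norm_nonneg _
      have hwn : (0:ℝ) ≤ ‖w - f i‖ := norm_nonneg _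
      simp only [Real.norm_ofNat] at hpar
      nlinarith [hpar, hi, hv, hw, hvn, hwn]
    by_contra hcon
    push_neg at hcon
    have := hm ((‖v - w‖ ^ 2 - (2 * r v ^ 2 + 2 * r w ^ 2 - 4 * r0 ^ 2)) / 2) (by linarith)
    linarith
  -- minimizing sequence
  have hseq : ∀ n : ℕ, ∃ v : H, r v < r0 + 1 / (n + 1) := by
    intro n
    apply exists_lt_of_ciInf_lt
    rw [← hr0]
    have : (0:ℝ) < 1 / (n + 1) := by positivity
    linarith
  choose u hu using hseq
  have hcauchy : CauchySeq u := by
    rw [Metric.cauchySeq_iff']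
    intro ε hε
    obtain ⟨N, hN⟩ := exists_nat_gt (max 1 ((8 * r0 + 4) / ε ^ 2))
    refine ⟨N, fun n hn => ?_⟩
    have ht : (0:ℝ) < 1 / (N + 1) := by positivity
    have htle : (1:ℝ) / (N + 1) ≤ 1 := by
      rw [div_le_one (by positivity)]
      have : (1:ℝ) ≤ max 1 ((8 * r0 + 4) / ε ^ 2) := le_max_left _ _
      push_cast; nlinarith [hN.le, this]
    have hnN : (1:ℝ) / (n + 1) ≤ 1 / (N + 1) := by
      apply one_div_le_one_div_of_le (by positivity)
      have : (N:ℝ) ≤ n := by exact_mod_cast hn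
      linarith
    have hk := key (u n) (u N)
    have hn1 := (hu n).le
    have hN1 := (hu N).le
    have hrn := hr0le (u n)
    have hrN := hr0le (u N)
    -- ‖u n - u N‖^2 ≤ 2 (r0+t)^2 + 2 (r0+t)^2 - 4 r0^2 = 8 r0 t + 4 t^2 ≤ (8 r0 + 4) t
    set t : ℝ := 1 / (N + 1) with htdef
    have hb1 : ‖u n - u N‖ ^ 2 ≤ (8 * r0 + 4) * t := by
      nlinarith [hk, hn1, hN1, hrn, hrN, hr0nn, ht, htle, hnN]
    have hb2 : (8 * r0 + 4) * t < ε ^ 2 := by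
      have hNt : ((8 * r0 + 4) / ε ^ 2) < N := lt_of_le_of_lt (le_max_right _ _) hN
      rw [div_lt_iff₀ (by positivity)] at hNt
      rw [htdef, mul_one_div, div_lt_iff₀ (by positivity)]
      nlinarith [hε]
    rw [dist_eq_norm]
    nlinarith [norm_nonneg (u n - u N), hb1, hb2]
  obtain ⟨v, hv⟩ := cauchySeq_tendsto_of_complete hcauchy
  have hlip : ∀ x y : H, r x ≤ r y + ‖x - y‖ := by
    intro x y
    apply ciSup_le
    intro i
    calc ‖x - f i‖ ≤ ‖y - f i‖ + ‖x - y‖ := by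
          have hxy : x - f i = (y - f i) + (x - y) := by abel
          rw [hxy]; exact norm_add_le _ _
      _ ≤ r y + ‖x - y‖ := by linarith [hle y i]
  have hrv : r v ≤ r0 := by
    apply le_of_forall_pos_le_add
    intro θ hθ
    obtain ⟨N1, hN1⟩ := Metric.tendsto_atTop.mp hv (θ / 2) (by linarith)
    obtain ⟨N2, hN2⟩ := exists_nat_gt (2 / θ)
    set n := max N1 N2 with hn
    have hd : dist (u n) v < θ / 2 := hN1 n (le_max_left _ _)
    have hfrac : 1 / ((n:ℝ) + 1) < θ / 2 := by
      have h2 : (2:ℝ) / θ < n := lt_of_lt_of_le hN2 (by exact_mod_cast le_max_right N1 N2)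
      rw [div_lt_iff₀ (by positivity)] at h2
      rw [div_lt_iff₀ (by positivity)]
      nlinarith
    calc r v ≤ r (u n) + ‖v - u n‖ := hlip v (u n)
      _ ≤ (r0 + 1 / (n + 1)) + dist (u n) v := by
          rw [dist_comm, dist_eq_norm]; linarith [(hu n).le]
      _ ≤ r0 + θ := by linarith
  have hrveq : r v = r0 := le_antisymm hrv (hr0le v)
  refine ⟨v, fun w hw => ?_⟩
  have hrw : r w ≤ r0 := by rw [← hrveq]; exact hw
  have hrweq : r w = r0 := le_antisymm hrw (hr0le w)
  have hk := key v w
  rw [hrveq, hrweq] at hk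
  have h1 : ‖v - w‖ ^ 2 ≤ 0 := by linarith
  have h2 : ‖v - w‖ = 0 := by
    have := sq_nonneg ‖v - w‖
    have h3 : ‖v - w‖ ^ 2 = 0 := le_antisymm h1 this
    exact pow_eq_zero_iff (by norm_num) |>.mp h3
  exact (norm_sub_eq_zero_iff.mp h2).symm


section Aux

-- linearity of barD2/barD3
lemma barD2_eq : barD2 Γ = ⇑(Finsupp.linearCombination ℂ (fun p : Γ × Γ =>
    Finsupp.single p.2 (1:ℂ) - Finsupp.single (p.1 * p.2) 1 + Finsupp.single p.1 1)) := by
  funext x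
  rw [Finsupp.linearCombination_apply]
  rfl

lemma barD3_eq : barD3 Γ = ⇑(Finsupp.linearCombination ℂ (fun t : Γ × Γ × Γ =>
    Finsupp.single (t.2.1, t.2.2) (1:ℂ) - Finsupp.single (t.1 * t.2.1, t.2.2) 1 +
      Finsupp.single (t.1, t.2.1 * t.2.2) 1 - Finsupp.single (t.1, t.2.1) 1)) := by
  funext x
  rw [Finsupp.linearCombination_apply]
  rfl

-- gstar basics
lemma gstar_single (g : Γ) (c : ℂ) :
    gstar Γ (MonoidAlgebra.single g c) = MonoidAlgebra.single g⁻¹ (starRingEnd ℂ c) := by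
  unfold gstar
  rw [MonoidAlgebra.coeff_single]
  exact Finsupp.sum_single_index (by simp)

lemma gstar_add (x y : MonoidAlgebra ℂ Γ) : gstar Γ (x + y) = gstar Γ x + gstar Γ y := by
  classical
  unfold gstar
  rw [MonoidAlgebra.coeff_add]
  exact Finsupp.sum_add_index (by simp) (by intros; rw [map_add]; exact MonoidAlgebra.single_add _ _ _)

lemma gstar_neg (x : MonoidAlgebra ℂ Γ) : gstar Γ (-x) = - gstar Γ x := by
  classical
  unfold gstar
  rw [MonoidAlgebra.coeff_neg, Finsupp.sum_neg_index (by simp)]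
  rw [← Finsupp.sum_neg]
  congr 1
  funext g c
  rw [map_neg]; exact MonoidAlgebra.single_neg _ _

lemma gstar_sub (x y : MonoidAlgebra ℂ Γ) : gstar Γ (x - y) = gstar Γ x - gstar Γ y := by
  rw [sub_eq_add_neg, gstar_add, gstar_neg, sub_eq_add_neg]

lemma gstar_gstar (x : MonoidAlgebra ℂ Γ) : gstar Γ (gstar Γ x) = x := by
  induction x using MonoidAlgebra.induction_linear with
  | zero => unfold gstar; simp
  | add f g hf hg => rw [gstar_add, gstar_add, hf, hg]
  | single g c => rw [gstar_single, gstar_single]; simp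

lemma aug_single (g : Γ) (c : ℂ) : aug Γ (MonoidAlgebra.single g c) = c := by
  unfold aug
  rw [MonoidAlgebra.lift_single]
  simp

lemma aug_gstar (x : MonoidAlgebra ℂ Γ) : aug Γ (gstar Γ x) = starRingEnd ℂ (aug Γ x) := by
  induction x using MonoidAlgebra.induction_linear with
  | zero => unfold gstar; simp
  | add f g hf hg => rw [gstar_add, map_add, map_add, hf, hg, map_add]
  | single g c => rw [gstar_single, aug_single, aug_single]

def Tbil (u v : MonoidAlgebra ℂ Γ) : (Γ × Γ) →₀ ℂ :=
  u.coeff.sum fun g c => v.coeff.sum fun h d => Finsupp.single (g, h) (c * d)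

lemma Tbil_zero_left (v : MonoidAlgebra ℂ Γ) : Tbil Γ 0 v = 0 := by
  unfold Tbil; exact Finsupp.sum_zero_index

lemma Tbil_zero_right (u : MonoidAlgebra ℂ Γ) : Tbil Γ u 0 = 0 := by
  unfold Tbil; simp

lemma Tbil_add_left (u u' v : MonoidAlgebra ℂ Γ) :
    Tbil Γ (u + u') v = Tbil Γ u v + Tbil Γ u' v := by
  classical
  unfold Tbil
  rw [MonoidAlgebra.coeff_add]
  refine Finsupp.sum_add_index (by simp) ?_
  intro g _ c c'
  rw [← Finsupp.sum_add]
  congr 1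
  funext h d
  rw [add_mul]
  exact Finsupp.single_add _ _ _

lemma Tbil_add_right (u v v' : MonoidAlgebra ℂ Γ) :
    Tbil Γ u (v + v') = Tbil Γ u v + Tbil Γ u v' := by
  classical
  unfold Tbil
  rw [← Finsupp.sum_add]
  congr 1
  funext g c
  rw [MonoidAlgebra.coeff_add]
  refine Finsupp.sum_add_index (by simp) ?_
  intro h _ d d'
  rw [mul_add]
  exact Finsupp.single_add _ _ _

lemma Tbil_single_single (g h : Γ) (c d : ℂ) :
    Tbil Γ (MonoidAlgebra.single g c) (MonoidAlgebra.single h d)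
      = Finsupp.single (g, h) (c * d) := by
  unfold Tbil
  rw [MonoidAlgebra.coeff_single, MonoidAlgebra.coeff_single, Finsupp.sum_single_index (by simp)]
  exact Finsupp.sum_single_index (by simp)

lemma barD2_Tbil (u v : MonoidAlgebra ℂ Γ) :
    barD2 Γ (Tbil Γ u v) = MonoidAlgebra.coeffLinearEquiv ℂ (aug Γ u • v + aug Γ v • u - u * v) := by
  induction u using MonoidAlgebra.induction_linear with
  | zero => rw [Tbil_zero_left]; simp [barD2_eq]
  | add f f' hf hf' =>
      rw [Tbil_add_left, barD2_eq] at *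
      rw [map_add, hf, hf', ← map_add]
      congr 1
      rw [map_add, add_mul]
      module
  | single g c =>
      induction v using MonoidAlgebra.induction_linear with
      | zero => rw [Tbil_zero_right]; simp [barD2_eq]
      | add f f' hf hf' =>
          rw [Tbil_add_right, barD2_eq] at *
          rw [map_add, hf, hf', ← map_add]
          congr 1
          rw [map_add, mul_add]
          module
      | single h d =>
          rw [Tbil_single_single, barD2_eq, Finsupp.linearCombination_single,
            aug_single, aug_single, MonoidAlgebra.single_mul_single]
          show (c*d) • ((Finsupp.single h (1:ℂ) - Finsupp.single (g*h) 1) + Finsupp.single g 1)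
            = (c • Finsupp.single h d + d • Finsupp.single g c) - Finsupp.single (g*h) (c*d)
          simp only [smul_sub, smul_add, Finsupp.smul_single, smul_eq_mul, mul_one]
          rw [mul_comm d c]
          abel

section Rep
variable {Γ}
variable {H : Type u} [NormedAddCommGroup H] [InnerProductSpace ℂ H]
  (π : Γ →* (H ≃ₗᵢ[ℂ] H)) (δ : Γ → H)

/-- linear extension of the cocycle -/
def dtil : MonoidAlgebra ℂ Γ →ₗ[ℂ] H :=
  Finsupp.linearCombination ℂ δ ∘ₗ (MonoidAlgebra.coeffLinearEquiv ℂ).toLinearMap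

lemma dtil_single (g : Γ) (c : ℂ) : dtil δ (MonoidAlgebra.single g c) = c • δ g := by
  rw [dtil, LinearMap.comp_apply]
  exact Finsupp.linearCombination_single ℂ c g

variable (hcoc : ∀ g h : Γ, δ (g * h) = π g (δ h) + δ g)
include hcoc

lemma delta_one : δ 1 = 0 := by
  have := hcoc 1 1
  rw [mul_one] at this
  have h2 : π 1 (δ 1) = δ 1 := by rw [map_one]; rfl
  rw [h2] at this
  linear_combination (norm := abel) this.symm

lemma delta_inv (g : Γ) : δ g⁻¹ = - (π g⁻¹) (δ g) := by
  have := hcoc g⁻¹ g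
  rw [inv_mul_cancel, delta_one π δ hcoc] at this
  exact eq_neg_of_add_eq_zero_right this.symm

/-- the 2-cocycle-killing functional -/
def qF : ((Γ × Γ) →₀ ℂ) →ₗ[ℂ] ℂ :=
  Finsupp.linearCombination ℂ (fun p : Γ × Γ => (inner ℂ (δ p.1⁻¹) (δ p.2) : ℂ))

omit hcoc in
lemma qF_single (g h : Γ) (c : ℂ) :
    qF δ (Finsupp.single (g, h) c) = c * (inner ℂ (δ g⁻¹) (δ h) : ℂ) := by
  unfold qF
  rw [Finsupp.linearCombination_single]
  rfl

lemma q_inner (g h : Γ) : (inner ℂ (δ g⁻¹) (δ h) : ℂ) = - (inner ℂ (δ g) (π g (δ h)) : ℂ) := by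
  rw [delta_inv π δ hcoc g, inner_neg_left]
  congr 1
  rw [show (inner ℂ (π g⁻¹ (δ g)) (δ h) : ℂ) = inner ℂ (π g (π g⁻¹ (δ g))) (π g (δ h))
    from ((π g).inner_map_map _ _).symm]
  congr 1
  rw [show π g (π g⁻¹ (δ g)) = (π g * π g⁻¹) (δ g) from rfl, ← map_mul, mul_inv_cancel, map_one]
  rfl

lemma qF_cocycle (g h k : Γ) :
    (inner ℂ (δ h⁻¹) (δ k) : ℂ) - inner ℂ (δ (g*h)⁻¹) (δ k) + inner ℂ (δ g⁻¹) (δ (h*k))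
      - inner ℂ (δ g⁻¹) (δ h) = 0 := by
  rw [q_inner π δ hcoc h k, q_inner π δ hcoc (g*h) k, q_inner π δ hcoc g (h*k),
    q_inner π δ hcoc g h]
  rw [hcoc g h, hcoc h k]
  rw [show π (g * h) = π g * π h from map_mul π g h]
  rw [show (π g * π h) (δ k) = π g (π h (δ k)) from rfl]
  rw [inner_add_left, map_add, inner_add_right]
  rw [(π g).inner_map_map]
  ring

lemma qF_barD3 (y : (Γ × Γ × Γ) →₀ ℂ) : qF δ (barD3 Γ y) = 0 := by
  rw [barD3_eq, Finsupp.linearCombination_apply, map_finsuppSum]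
  rw [Finsupp.sum]
  apply Finset.sum_eq_zero
  intro t _
  rw [map_smul]
  rw [show (Finsupp.single (t.2.1, t.2.2) (1:ℂ) - Finsupp.single (t.1 * t.2.1, t.2.2) 1 +
      Finsupp.single (t.1, t.2.1 * t.2.2) 1 - Finsupp.single (t.1, t.2.1) 1 : (Γ×Γ) →₀ ℂ)
    = Finsupp.single ((t.2.1, t.2.2) : Γ × Γ) (1:ℂ) - Finsupp.single (t.1 * t.2.1, t.2.2) 1 +
      Finsupp.single (t.1, t.2.1 * t.2.2) 1 - Finsupp.single (t.1, t.2.1) 1 from rfl]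
  rw [map_sub, map_add, map_sub, qF_single, qF_single, qF_single, qF_single]
  simp only [one_mul]
  rw [qF_cocycle π δ hcoc t.1 t.2.1 t.2.2]
  simp

omit hcoc in
lemma qF_Tbil (u v : MonoidAlgebra ℂ Γ) :
    qF δ (Tbil Γ u v) = inner ℂ (dtil δ (gstar Γ u)) (dtil δ v) := by
  induction u using MonoidAlgebra.induction_linear with
  | zero => rw [Tbil_zero_left]; simp [gstar]
  | add f f' hf hf' =>
      rw [Tbil_add_left, map_add, hf, hf', gstar_add, map_add, inner_add_left]
  | single g c =>
      induction v using MonoidAlgebra.induction_linear with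
      | zero => rw [Tbil_zero_right]; simp
      | add f f' hf hf' =>
          rw [Tbil_add_right, map_add, hf, hf', map_add, inner_add_right]
      | single h d =>
          rw [Tbil_single_single, qF_single, gstar_single, dtil_single, dtil_single]
          rw [inner_smul_left, inner_smul_right, Complex.conj_conj]
          ring

end Rep


lemma cE_eq (g : Γ) : cE Γ g = MonoidAlgebra.single g 1 - MonoidAlgebra.single 1 1 := by
  unfold cE
  rw [MonoidAlgebra.of_apply, MonoidAlgebra.one_def]

lemma aug_cE (g : Γ) : aug Γ (cE Γ g) = 0 := by
  rw [cE_eq, map_sub, aug_single, aug_single, sub_self]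

lemma gstar_cE (g : Γ) : gstar Γ (cE Γ g) = cE Γ g⁻¹ := by
  rw [cE_eq, cE_eq, gstar_sub, gstar_single, gstar_single]
  simp

lemma gstar_cE_mul_cE (g : Γ) :
    gstar Γ (cE Γ g) * cE Γ g
      = MonoidAlgebra.single 1 2 - MonoidAlgebra.single g 1 - MonoidAlgebra.single g⁻¹ 1 := by
  rw [gstar_cE, cE_eq, cE_eq, sub_mul, mul_sub, mul_sub,
    MonoidAlgebra.single_mul_single, MonoidAlgebra.single_mul_single,
    MonoidAlgebra.single_mul_single, MonoidAlgebra.single_mul_single]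
  simp only [inv_mul_cancel, one_mul, mul_one]
  have h2 : MonoidAlgebra.single (1:Γ) (2:ℂ)
      = MonoidAlgebra.single 1 1 + MonoidAlgebra.single 1 1 := by
    rw [show (2:ℂ) = 1 + 1 from by norm_num]; exact MonoidAlgebra.single_add _ _ _
  rw [h2]; abel

lemma sum_gstar_cE (S : Finset Γ) (hsym : ∀ s ∈ S, s⁻¹ ∈ S) :
    ∑ s ∈ S, gstar Γ (cE Γ s) * cE Γ s = (2:ℂ) • Delta Γ S := by
  classical
  have hinv : ∑ s ∈ S, MonoidAlgebra.single (s⁻¹ : Γ) (1:ℂ)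
      = ∑ s ∈ S, MonoidAlgebra.single s (1:ℂ) := by
    apply Finset.sum_nbij' (fun s => s⁻¹) (fun s => s⁻¹)
    · exact fun s hs => hsym s hs
    · exact fun s hs => hsym s hs
    · intro s _; exact inv_inv s
    · intro s _; exact inv_inv s
    · intro s _; rfl
  calc ∑ s ∈ S, gstar Γ (cE Γ s) * cE Γ s
      = ∑ s ∈ S, (MonoidAlgebra.single (1:Γ) (2:ℂ) - MonoidAlgebra.single s 1
          - MonoidAlgebra.single s⁻¹ 1) := by
        exact Finset.sum_congr rfl fun s _ => gstar_cE_mul_cE Γ s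
    _ = S.card • MonoidAlgebra.single (1:Γ) (2:ℂ) - ∑ s ∈ S, MonoidAlgebra.single s 1
          - ∑ s ∈ S, MonoidAlgebra.single (s⁻¹:Γ) (1:ℂ) := by
        rw [Finset.sum_sub_distrib, Finset.sum_sub_distrib, Finset.sum_const]
    _ = (2:ℂ) • Delta Γ S := by
        rw [hinv]
        unfold Delta
        rw [MonoidAlgebra.natCast_def]
        have h1 : (S.card : ℕ) • MonoidAlgebra.single (1:Γ) (2:ℂ)
            = (2:ℂ) • MonoidAlgebra.single (1:Γ) (S.card : ℂ) := by
          rw [MonoidAlgebra.smul_single, MonoidAlgebra.smul_single]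
          congr 1
          simp [mul_comm]
        have h2 : ∑ s ∈ S, MonoidAlgebra.of ℂ Γ s = ∑ s ∈ S, MonoidAlgebra.single s (1:ℂ) := by
          simp [MonoidAlgebra.of_apply]
        rw [h1, h2]
        module

lemma l1norm_single (g : Γ) (c : ℂ) : l1norm Γ (MonoidAlgebra.single g c) = ‖c‖ := by
  unfold l1norm
  rw [MonoidAlgebra.coeff_single]
  rcases eq_or_ne c 0 with h | h
  · subst h; simp
  · exact Finsupp.sum_single_index (by simp)

lemma l1norm_add_disjoint (x y : MonoidAlgebra ℂ Γ)
    (h : Disjoint x.coeff.support y.coeff.support) : l1norm Γ (x + y) = l1norm Γ x + l1norm Γ y := by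
  classical
  unfold l1norm Finsupp.sum
  rw [MonoidAlgebra.coeff_add, Finsupp.support_add_eq h, Finset.sum_union h]
  congr 1
  · apply Finset.sum_congr rfl
    intro a ha
    have hy : y.coeff a = 0 := Finsupp.notMem_support_iff.mp (Finset.disjoint_left.mp h ha)
    rw [Finsupp.add_apply, hy, add_zero]
  · apply Finset.sum_congr rfl
    intro a ha
    have hx : x.coeff a = 0 := Finsupp.notMem_support_iff.mp (Finset.disjoint_right.mp h ha)
    rw [Finsupp.add_apply, hx, zero_add]

lemma barD2_add (x y : (Γ × Γ) →₀ ℂ) : barD2 Γ (x + y) = barD2 Γ x + barD2 Γ y := by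
  rw [barD2_eq]; exact map_add _ _ _

lemma barD2_sub (x y : (Γ × Γ) →₀ ℂ) : barD2 Γ (x - y) = barD2 Γ x - barD2 Γ y := by
  rw [barD2_eq]; exact map_sub _ _ _

lemma barD2_smul (c : ℂ) (x : (Γ × Γ) →₀ ℂ) : barD2 Γ (c • x) = c • barD2 Γ x := by
  rw [barD2_eq]; exact map_smul _ _ _

lemma barD2_sum {ι : Type*} (s : Finset ι) (f : ι → ((Γ × Γ) →₀ ℂ)) :
    barD2 Γ (∑ i ∈ s, f i) = ∑ i ∈ s, barD2 Γ (f i) := by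
  rw [barD2_eq]; exact map_sum _ _ _

section Main
variable {Γ}
variable {H : Type u} [NormedAddCommGroup H] [InnerProductSpace ℂ H]
  (π : Γ →* (H ≃ₗᵢ[ℂ] H)) (δ : Γ → H)

lemma norm_delta_bound (S : Finset Γ) (hsym : ∀ s ∈ S, s⁻¹ ∈ S)
    (hH2 : ∀ x : (Γ × Γ) →₀ ℂ, barD2 Γ x = 0 → ∃ y : (Γ × Γ × Γ) →₀ ℂ, barD3 Γ y = x)
    (ε : ℝ) (hε : 0 < ε)
    (hint : ∀ b : MonoidAlgebra ℂ Γ, aug Γ b = 0 → gstar Γ b = b → l1norm Γ b = 1 →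
      ∃ (n : ℕ) (c : Fin n → MonoidAlgebra ℂ Γ), (∀ i, aug Γ (c i) = 0) ∧
        Delta Γ S + (ε : ℂ) • b = ∑ i, gstar Γ (c i) * c i)
    (hcoc : ∀ g h : Γ, δ (g * h) = π g (δ h) + δ g) (g₀ : Γ) :
    ε * ‖δ g₀‖ ^ 2 ≤ 2 * ∑ s ∈ S, ‖δ s‖ ^ 2 := by
  classical
  have hCnn : (0:ℝ) ≤ ∑ s ∈ S, ‖δ s‖ ^ 2 := Finset.sum_nonneg fun s _ => sq_nonneg _
  rcases eq_or_ne g₀ 1 with h1 | h1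
  · rw [h1, delta_one π δ hcoc]
    simp only [norm_zero]
    nlinarith
  set b' : MonoidAlgebra ℂ Γ := MonoidAlgebra.single g₀ (4⁻¹:ℂ)
    + MonoidAlgebra.single g₀⁻¹ (4⁻¹:ℂ) + MonoidAlgebra.single (1:Γ) (-2⁻¹:ℂ) with hb'def
  have haug : aug Γ b' = 0 := by
    rw [hb'def, map_add, map_add, aug_single, aug_single, aug_single]
    norm_num
  have hstar : gstar Γ b' = b' := by
    rw [hb'def, gstar_add, gstar_add, gstar_single, gstar_single, gstar_single]
    have c1 : (starRingEnd ℂ) (4⁻¹:ℂ) = 4⁻¹ := by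
      rw [map_inv₀, map_ofNat]
    have c2 : (starRingEnd ℂ) (-2⁻¹:ℂ) = -2⁻¹ := by
      rw [map_neg, map_inv₀, map_ofNat]
    rw [c1, c2, inv_inv, inv_one]
    abel
  have hnorm : l1norm Γ b' = 1 := by
    have habs4 : ‖(4⁻¹:ℂ)‖ = 4⁻¹ := by
      norm_num
    have habs2 : ‖(-2⁻¹:ℂ)‖ = 2⁻¹ := by
      norm_num
    rcases eq_or_ne g₀⁻¹ g₀ with hgg | hgg
    · have : b' = MonoidAlgebra.single g₀ (2⁻¹:ℂ) + MonoidAlgebra.single (1:Γ) (-2⁻¹:ℂ) := by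
        rw [hb'def, hgg]
        rw [show MonoidAlgebra.single g₀ (4⁻¹:ℂ) + MonoidAlgebra.single g₀ (4⁻¹:ℂ)
            = MonoidAlgebra.single g₀ ((4⁻¹:ℂ) + 4⁻¹) from (MonoidAlgebra.single_add _ _ _).symm]
        norm_num
      rw [this, l1norm_add_disjoint, l1norm_single, l1norm_single, habs2]
      · norm_num
      · rw [MonoidAlgebra.coeff_single, MonoidAlgebra.coeff_single, Finsupp.support_single_ne_zero _ (by norm_num : (2⁻¹:ℂ) ≠ 0),
          Finsupp.support_single_ne_zero _ (by norm_num : (-2⁻¹:ℂ) ≠ 0)]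
        simp [h1]
    · have hd1 : Disjoint (MonoidAlgebra.single g₀ (4⁻¹:ℂ)).coeff.support
          (MonoidAlgebra.single g₀⁻¹ (4⁻¹:ℂ)).coeff.support := by
        rw [MonoidAlgebra.coeff_single, MonoidAlgebra.coeff_single, Finsupp.support_single_ne_zero _ (by norm_num : (4⁻¹:ℂ) ≠ 0),
          Finsupp.support_single_ne_zero _ (by norm_num : (4⁻¹:ℂ) ≠ 0)]
        rw [Finset.disjoint_singleton]
        exact Ne.symm hgg
      have hd2 : Disjoint (MonoidAlgebra.single g₀ (4⁻¹:ℂ)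
          + MonoidAlgebra.single g₀⁻¹ (4⁻¹:ℂ)).coeff.support
          (MonoidAlgebra.single (1:Γ) (-2⁻¹:ℂ)).coeff.support := by
        rw [MonoidAlgebra.coeff_add, Finsupp.support_add_eq hd1, MonoidAlgebra.coeff_single,
          MonoidAlgebra.coeff_single, MonoidAlgebra.coeff_single,
          Finsupp.support_single_ne_zero _ (by norm_num : (4⁻¹:ℂ) ≠ 0),
          Finsupp.support_single_ne_zero _ (by norm_num : (4⁻¹:ℂ) ≠ 0),
          Finsupp.support_single_ne_zero _ (by norm_num : (-2⁻¹:ℂ) ≠ 0)]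
        rw [Finset.disjoint_union_left, Finset.disjoint_singleton, Finset.disjoint_singleton]
        exact ⟨h1, fun h => h1 (by rw [← inv_inv g₀, h, inv_one])⟩
      rw [hb'def, l1norm_add_disjoint Γ _ _ hd2, l1norm_add_disjoint Γ _ _ hd1,
        l1norm_single, l1norm_single, l1norm_single, habs4, habs2]
      norm_num
  obtain ⟨n, c, hcaug, hsum⟩ := hint b' haug hstar hnorm
  set X : (Γ × Γ) →₀ ℂ := (∑ i, Tbil Γ (gstar Γ (c i)) (c i))
    + ((ε:ℂ)/4) • Tbil Γ (gstar Γ (cE Γ g₀)) (cE Γ g₀)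
    - (2⁻¹:ℂ) • ∑ s ∈ S, Tbil Γ (gstar Γ (cE Γ s)) (cE Γ s) with hXdef
  have hTc : ∀ a : MonoidAlgebra ℂ Γ, aug Γ a = 0 →
      barD2 Γ (Tbil Γ (gstar Γ a) a) = -MonoidAlgebra.coeffLinearEquiv ℂ (gstar Γ a * a) := by
    intro a ha
    rw [barD2_Tbil, aug_gstar, ha, map_zero, zero_smul, zero_smul, zero_add, zero_sub, map_neg]
  have hX0 : barD2 Γ X = 0 := by
    rw [hXdef, barD2_sub, barD2_add, barD2_smul, barD2_smul, barD2_sum, barD2_sum]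
    rw [Finset.sum_congr rfl fun i _ => hTc (c i) (hcaug i),
      Finset.sum_congr rfl fun s _ => hTc (cE Γ s) (aug_cE Γ s),
      hTc (cE Γ g₀) (aug_cE Γ g₀)]
    apply (MonoidAlgebra.coeffLinearEquiv ℂ).symm.injective
    simp only [map_sub, map_add, map_smul, map_sum, map_neg, LinearEquiv.symm_apply_apply,
      map_zero]
    rw [Finset.sum_neg_distrib, Finset.sum_neg_distrib, ← hsum, sum_gstar_cE Γ S hsym]
    have hc4 : gstar Γ (cE Γ g₀) * cE Γ g₀ = (-4:ℂ) • b' := by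
      rw [gstar_cE_mul_cE, hb'def, smul_add, smul_add, MonoidAlgebra.smul_single,
        MonoidAlgebra.smul_single, MonoidAlgebra.smul_single]
      rw [show ((-4:ℂ)•(4⁻¹:ℂ)) = -1 from by norm_num,
        show ((-4:ℂ)•(-2⁻¹:ℂ)) = 2 from by norm_num]
      simp only [MonoidAlgebra.single_neg]
      abel
    rw [hc4]
    module
  obtain ⟨y, hy⟩ := hH2 X hX0
  have hFX : qF δ X = 0 := by rw [← hy, qF_barD3 π δ hcoc]
  have hT : ∀ a : MonoidAlgebra ℂ Γ, qF δ (Tbil Γ (gstar Γ a) a) = ((‖dtil δ a‖^2 : ℝ):ℂ) := by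
    intro a
    rw [qF_Tbil, gstar_gstar]
    exact_mod_cast inner_self_eq_norm_sq_to_K (𝕜 := ℂ) (dtil δ a)
  have hdc : ∀ g : Γ, dtil δ (cE Γ g) = δ g := by
    intro g
    rw [cE_eq, map_sub, dtil_single, dtil_single, one_smul, one_smul,
      delta_one π δ hcoc, sub_zero]
  rw [hXdef, map_sub, map_add, map_smul, map_smul, map_sum, map_sum] at hFX
  rw [Finset.sum_congr rfl fun i _ => hT (c i),
    Finset.sum_congr rfl fun s _ => hT (cE Γ s), hT (cE Γ g₀)] at hFX
  simp only [hdc] at hFX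
  have hreal : ((∑ i, ‖dtil δ (c i)‖^2 + (ε/4) * ‖δ g₀‖^2
      - 2⁻¹ * ∑ s ∈ S, ‖δ s‖^2 : ℝ) : ℂ) = 0 := by
    rw [← hFX]
    push_cast
    simp only [smul_eq_mul]
    try ring
  rw [Complex.ofReal_eq_zero] at hreal
  have hA : (0:ℝ) ≤ ∑ i, ‖dtil δ (c i)‖^2 := Finset.sum_nonneg fun i _ => sq_nonneg _
  nlinarith

end Main

end Aux

/-- **An `ℓ¹`-interior point of `Σ²ω(Γ)` gives property (T) when `H₂(Γ,ℂ) = 0`.**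
Let `Γ` be generated by the finite symmetric set `S`, and assume the second group homology
`H₂(Γ, ℂ)` with trivial complex coefficients vanishes (expressed via the bar complex:
every 2-cycle is a boundary).  If there is a real `ε > 0` with `Δ(S) + ε·b ∈ Σ²ω(Γ)` for
every hermitian `b ∈ ω(Γ)` with `‖b‖₁ = 1`, then `Γ` has Kazhdan's property (T). -/
theorem propertyT_of_laplacian_l1_interior (S : Finset Γ)
    (hsym : ∀ s ∈ S, s⁻¹ ∈ S) (hgen : Subgroup.closure (S : Set Γ) = ⊤)
    (hH2 : ∀ x : (Γ × Γ) →₀ ℂ, barD2 Γ x = 0 → ∃ y : (Γ × Γ × Γ) →₀ ℂ, barD3 Γ y = x)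
    (ε : ℝ) (hε : 0 < ε)
    (hint : ∀ b ∈ omega Γ, gstar Γ b = b → l1norm Γ b = 1 →
      Delta Γ S + (ε : ℂ) • b ∈ SOSomega Γ) :
    PropertyT Γ := by
  intro H hN hI hC π δ hcoc
  letI := hN; letI := hI; letI := hC
  haveI : Nonempty Γ := ⟨1⟩
  have hint' : ∀ b : MonoidAlgebra ℂ Γ, aug Γ b = 0 → gstar Γ b = b → l1norm Γ b = 1 →
      ∃ (n : ℕ) (c : Fin n → MonoidAlgebra ℂ Γ), (∀ i, aug Γ (c i) = 0) ∧
        Delta Γ S + (ε : ℂ) • b = ∑ i, gstar Γ (c i) * c i := by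
    intro b hb hb2 hb3
    obtain ⟨n, c, hc, hsum⟩ := hint b hb hb2 hb3
    exact ⟨n, c, fun i => hc i, hsum⟩
  have hbound : ∀ g : Γ, ‖δ g‖ ≤ Real.sqrt ((2/ε) * ∑ s ∈ S, ‖δ s‖^2) := by
    intro g
    have h := norm_delta_bound π δ S hsym hH2 ε hε hint' hcoc g
    rw [show ‖δ g‖ = Real.sqrt (‖δ g‖^2) from (Real.sqrt_sq (norm_nonneg _)).symm]
    apply Real.sqrt_le_sqrt
    rw [div_mul_eq_mul_div, le_div_iff₀ hε]
    nlinarith [h]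
  obtain ⟨v, hv⟩ := exists_chebyshev_center δ _ hbound
  refine ⟨-v, fun g => ?_⟩
  have hfix : π g v + δ g = v := by
    apply hv
    have heq : ∀ h : Γ, ‖(π g v + δ g) - δ (g * h)‖ = ‖v - δ h‖ := by
      intro h
      rw [hcoc g h,
        show π g v + δ g - (π g (δ h) + δ g) = π g v - π g (δ h) from by abel,
        ← LinearIsometryEquiv.map_sub, LinearIsometryEquiv.norm_map]
    have hre : (⨆ h, ‖(π g v + δ g) - δ h‖) = ⨆ h, ‖v - δ h‖ := by
      calc (⨆ h, ‖(π g v + δ g) - δ h‖) = ⨆ h, ‖(π g v + δ g) - δ (g * h)‖ :=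
          ((Equiv.mulLeft g).surjective.iSup_comp _).symm
        _ = ⨆ h, ‖v - δ h‖ := iSup_congr heq
    exact le_of_eq hre
  have hdg : δ g = v - π g v := eq_sub_of_add_eq' hfix
  rw [show π g (-v) - (-v) = v - π g v from by rw [map_neg]; abel]
  exact hdg
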